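/- Let β, L, M > 0 and define D₀(s) = s·(1 + βL/M + L·s/M) for s ≥ 0. Let g : ℝ → ℝ be differentiable at 0 with g(0) = 0 and g′(0) = 0, let D₁, P_e : [0,∞) → ℝ be differentiable at 0 with P_e(0) = 0 and P_e(s) ≥ 0, satisfying P_e(s) = g( D₀(s) + D₁(s)·P_e(s) ) for all s in a right neighborhood of 0. Then lim_{s→0⁺} s / ( D₀(s) + D₁(s)·P_e(s) ) = 1 / (1 + Lβ/M) = M/(M + Lβ). That is, the asymptotic multiuser efficiency of the iterative receiver equals 1/(1 + Lβ/M). -/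

import Mathlib

open Filter

/-- The asymptotic multiuser efficiency of the iterative receiver: with
`D₀(s) = s (1 + βL/M + Ls/M)` and the fixed point `P_e(s) = g(D₀(s) + D₁(s) P_e(s))`,
`lim_{s→0⁺} s / (D₀(s) + D₁(s) P_e(s)) = 1/(1 + Lβ/M) = M/(M + Lβ)`. -/
theorem stmt_13 (β L M : ℝ) (hβ : 0 < β) (hL : 0 < L) (hM : 0 < M)
    (g : ℝ → ℝ) (hg0 : g 0 = 0) (hg' : HasDerivAt g 0 0)
    (D₁ Pe : ℝ → ℝ) (d₁ p : ℝ)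
    (hD₁ : HasDerivWithinAt D₁ d₁ (Set.Ici 0) 0)
    (hPe : HasDerivWithinAt Pe p (Set.Ici 0) 0)
    (hPe0 : Pe 0 = 0) (hPenn : ∀ s : ℝ, 0 ≤ s → 0 ≤ Pe s)
    (hfix : ∃ ε > 0, ∀ s : ℝ, 0 ≤ s → s < ε →
      Pe s = g (s * (1 + β * L / M + L * s / M) + D₁ s * Pe s)) :
    Tendsto (fun s => s / (s * (1 + β * L / M + L * s / M) + D₁ s * Pe s))
      (nhdsWithin 0 (Set.Ioi 0)) (nhds (1 / (1 + L * β / M)))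
    ∧ 1 / (1 + L * β / M) = M / (M + L * β) := by
  have hA : (0:ℝ) < 1 + β * L / M := by positivity
  set F : ℝ → ℝ := fun s => s * (1 + β * L / M + L * s / M) + D₁ s * Pe s with hFdef
  have hF0 : F 0 = 0 := by simp [hFdef, hPe0]
  -- derivative of the polynomial part
  have hq : HasDerivAt (fun s : ℝ => s * (1 + β * L / M + L * s / M)) (1 + β * L / M) 0 := by
    have h1 : HasDerivAt (fun s : ℝ => (1 + β * L / M) * s) (1 + β * L / M) 0 := by
      simpa using (hasDerivAt_id (0:ℝ)).const_mul (1 + β * L / M)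
    have h2 : HasDerivAt (fun s : ℝ => (L / M) * (s * s)) 0 0 := by
      simpa using ((hasDerivAt_id (0:ℝ)).mul (hasDerivAt_id 0)).const_mul (L / M)
    have h := h1.add h2
    simpa using h.congr_of_eventuallyEq (Filter.Eventually.of_forall fun s => by simp only [Pi.add_apply]; ring)
  have hF : HasDerivWithinAt F (1 + β * L / M + D₁ 0 * p) (Set.Ici 0) 0 := by
    have := hq.hasDerivWithinAt.add (hD₁.mul hPe)
    simp only [hPe0, mul_zero, zero_add] at this
    exact this
  -- composition with g
  have hg'' : HasDerivAt g 0 (F 0) := by rwa [hF0]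
  have hcomp : HasDerivWithinAt (g ∘ F) 0 (Set.Ici 0) 0 := by
    simpa using hg''.comp_hasDerivWithinAt 0 hF
  -- Pe equals g ∘ F near 0 within Ici 0
  obtain ⟨ε, hε, hfx⟩ := hfix
  have heq : Pe =ᶠ[nhdsWithin 0 (Set.Ici 0)] (g ∘ F) := by
    have hmem : Set.Iio ε ∈ nhdsWithin (0:ℝ) (Set.Ici 0) :=
      nhdsWithin_le_nhds (Iio_mem_nhds hε)
    filter_upwards [hmem, self_mem_nhdsWithin] with s hs1 hs2
    exact hfx s hs2 hs1
  have hPe' : HasDerivWithinAt Pe 0 (Set.Ici 0) 0 :=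
    hcomp.congr_of_eventuallyEq heq (by simp [Function.comp, hF0, hg0, hPe0])
  have hp : p = 0 := by
    have hu := uniqueDiffOn_Ici (0:ℝ) 0 Set.self_mem_Ici
    rw [← hPe.derivWithin hu, hPe'.derivWithin hu]
  -- slope limit : Pe s / s → 0 on Ioi 0
  have hslope : Tendsto (fun s => Pe s / s) (nhdsWithin 0 (Set.Ioi 0)) (nhds 0) := by
    have h := (hasDerivWithinAt_iff_tendsto_slope.mp hPe')
    have hset : Set.Ici (0:ℝ) \ {0} = Set.Ioi 0 := Set.Ici_sdiff_left
    rw [hset] at h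
    refine h.congr' ?_
    filter_upwards [self_mem_nhdsWithin] with s hs
    simp [slope, hPe0, div_eq_inv_mul]
  have hD₁c : Tendsto D₁ (nhdsWithin 0 (Set.Ioi 0)) (nhds (D₁ 0)) :=
    hD₁.continuousWithinAt.mono Set.Ioi_subset_Ici_self
  -- F s / s → 1 + βL/M
  have hpoly : Tendsto (fun s : ℝ => 1 + β * L / M + L * s / M)
      (nhdsWithin 0 (Set.Ioi 0)) (nhds (1 + β * L / M)) := by
    have : ContinuousAt (fun s : ℝ => 1 + β * L / M + L * s / M) 0 := by fun_prop
    simpa using this.continuousWithinAt.tendsto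
  have hFs : Tendsto (fun s => F s / s) (nhdsWithin 0 (Set.Ioi 0)) (nhds (1 + β * L / M)) := by
    have h : Tendsto (fun s : ℝ => (1 + β * L / M + L * s / M) + D₁ s * (Pe s / s))
        (nhdsWithin 0 (Set.Ioi 0)) (nhds (1 + β * L / M)) := by
      simpa using hpoly.add (hD₁c.mul hslope)
    refine h.congr' ?_
    filter_upwards [self_mem_nhdsWithin] with s hs
    have hs' : s ≠ 0 := ne_of_gt hs
    field_simp [hFdef]
    simp only [F]
    field_simp
  have hinv : Tendsto (fun s => (F s / s)⁻¹) (nhdsWithin 0 (Set.Ioi 0))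
      (nhds (1 + β * L / M)⁻¹) := hFs.inv₀ (ne_of_gt hA)
  constructor
  · have : (1 : ℝ) / (1 + L * β / M) = (1 + β * L / M)⁻¹ := by rw [one_div, mul_comm L β]
    rw [this]
    refine hinv.congr' ?_
    filter_upwards with s
    rw [inv_div]
  · have h1 : (1:ℝ) + L * β / M ≠ 0 := by positivity
    have h2 : M + L * β ≠ 0 := by positivity
    field_simp
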